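/- Let L be an admissible labeling of the JSBAF of a Deductive ASPIC⊖ argumentation system, and let a, a′ be arguments with DR(a′) ⊆ DR(a) and ADSub(a′)^C ⊆ ADSub(a)^C. If L(a′) = OUT then L(a) = OUT. -/

import Mathlib

namespace JS

inductive Lab : Type
  | IN | OUT | UNDEC
deriving DecidableEq

structure JSBAF (A : Type) where
  att : A → A → Prop
  supp : Set A → A → Prop
  pref : A → A → Prop

variable {A : Type}

/-- Strict arguments: supported by the empty set or only by strict arguments. -/
inductive Strict (J : JSBAF A) : A → Prop
  | mk (S : Set A) (a : A) (h : J.supp S a) (hS : ∀ b ∈ S, Strict J b) : Strict J a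

/-- Structural restrictions on JSBAFs. -/
structure Restr (J : JSBAF A) : Prop where
  finSupp : ∀ S b, J.supp S b → S.Finite
  uniqSupp : ∀ S S' b, J.supp S b → J.supp S' b → S = S'
  acyc : ∀ a, ¬ Relation.TransGen (fun x y => ∃ S, J.supp S y ∧ x ∈ S) a a
  strictUnatt : ∀ a b, Strict J b → ¬ J.att a b
  prefRefl : ∀ a, J.pref a a
  prefTrans : ∀ a b c, J.pref a b → J.pref b c → J.pref a c
  prefTotal : ∀ a b, J.pref a b ∨ J.pref b a
  strictEq : ∀ a b, Strict J a → Strict J b → J.pref a b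
  strictTop : ∀ a b, ¬ Strict J a → Strict J b → J.pref a b ∧ ¬ J.pref b a

def inL (L : A → Lab) : Set A := {a | L a = Lab.IN}
def outL (L : A → Lab) : Set A := {a | L a = Lab.OUT}
def undecL (L : A → Lab) : Set A := {a | L a = Lab.UNDEC}

/-- Definition 2, item 1: legally IN. -/
def legallyIn (J : JSBAF A) (L : A → Lab) (a : A) : Prop :=
  (∀ b, J.att b a → L b = Lab.OUT) ∧
  ∀ S c, J.supp S c → a ∈ S → (∀ b ∈ S, b ≠ a → J.pref a b) →
    (L c = Lab.IN ∨
     (L c = Lab.UNDEC ∧ ∃ b ∈ S, b ≠ a ∧ (L b = Lab.OUT ∨ L b = Lab.UNDEC)) ∨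
     (L c = Lab.OUT ∧
       ((∃ b ∈ S, b ≠ a ∧ L b = Lab.OUT) ∨
        (∃ b₁ ∈ S, ∃ b₂ ∈ S, b₁ ≠ a ∧ b₂ ≠ a ∧ b₁ ≠ b₂ ∧
          L b₁ = Lab.UNDEC ∧ L b₂ = Lab.UNDEC))))

/-- Definition 2, item 2: legally OUT. -/
def legallyOut (J : JSBAF A) (L : A → Lab) (a : A) : Prop :=
  (∃ b, J.att b a ∧ L b = Lab.IN) ∨
  (∃ (n : ℕ) (S : ℕ → Set A) (b : ℕ → A),
    (∀ i ≤ n, J.supp (S i) (b i)) ∧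
    (∀ i < n, b i ∈ S (i + 1)) ∧
    a ∈ S 0 ∧
    (∀ d ∈ S 0, d ≠ a → L d = Lab.IN) ∧
    (∃ c, J.att c (b n) ∧ L c = Lab.IN) ∧
    (∀ i ≤ n, L (b i) = Lab.OUT) ∧
    (∀ i, 1 ≤ i → i ≤ n → ∀ d ∈ S i, d ≠ b (i - 1) → L d = Lab.IN) ∧
    (∀ d ∈ S 0, d ≠ a → J.pref a d))

/-- Admissible labelings. -/
def Admissible (J : JSBAF A) (L : A → Lab) : Prop :=
  (∀ a, L a = Lab.IN → legallyIn J L a) ∧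
  (∀ a, L a = Lab.OUT ↔ legallyOut J L a) ∧
  (∀ a, Strict J a → L a = Lab.IN)

/-- Preferred labelings: maximal admissible w.r.t. inclusion of IN-sets. -/
def Preferred (J : JSBAF A) (L : A → Lab) : Prop :=
  Admissible J L ∧ ∀ L', Admissible J L' → ¬ (inL L ⊂ inL L')

/-- The iterated OUT-sets of the SIM labeling. -/
def simO (J : JSBAF A) : ℕ → Set A
  | 0 => {a | ∃ b, Strict J b ∧ J.att b a}
  | n + 1 => simO J n ∪
      {a | ∃ S c, J.supp S c ∧ a ∈ S ∧ c ∈ simO J n ∧ ∀ d ∈ S, d ≠ a → Strict J d}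

def simIn (J : JSBAF A) : Set A := {a | Strict J a}
def simOut (J : JSBAF A) : Set A := ⋃ n, simO J n

open Classical in
/-- The strict-including-minimal labeling. -/
noncomputable def SIM (J : JSBAF A) : A → Lab := fun a =>
  if Strict J a then Lab.IN else if a ∈ simOut J then Lab.OUT else Lab.UNDEC

/-- The order on labelings. -/
def leL (L₁ L₂ : A → Lab) : Prop := inL L₁ ⊆ inL L₂ ∧ outL L₁ ⊆ outL L₂

end JS
namespace ASPIC

/-- An underlying logical language: formulas, atoms, interpretations, a classical
negation and conjunction, and the interpolation-style assumption on syntactically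
disjoint sets of formulas. -/
structure Logic where
  F : Type
  Atom : Type
  atoms : F → Set Atom
  I : Type
  inhab : Nonempty I
  Models : I → F → Prop
  neg : F → F
  conj : F → F → F
  neg_spec : ∀ i φ, Models i (neg φ) ↔ ¬ Models i φ
  conj_spec : ∀ i φ ψ, Models i (conj φ ψ) ↔ (Models i φ ∧ Models i ψ)
  atoms_neg : ∀ φ, atoms (neg φ) = atoms φ
  atoms_conj : ∀ φ ψ, atoms (conj φ ψ) = atoms φ ∪ atoms ψ
  interp : ∀ Γ Δ : Set F, (∀ φ ∈ Γ, ∀ ψ ∈ Δ, atoms φ ∩ atoms ψ = ∅) →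
    (∃ i, ∀ φ ∈ Γ, Models i φ) → (∃ i, ∀ ψ ∈ Δ, Models i ψ) →
    (∃ i, (∀ φ ∈ Γ, Models i φ) ∧ (∀ ψ ∈ Δ, Models i ψ))

/-- The model-based consequence relation ⊨_C. -/
def Conseq (L : Logic) (Γ : Set L.F) (φ : L.F) : Prop :=
  ∀ i, (∀ ψ ∈ Γ, L.Models i ψ) → L.Models i φ

/-- φ = −ψ: one formula is the negation of the other. -/
def negOf (L : Logic) (φ ψ : L.F) : Prop := φ = L.neg ψ ∨ ψ = L.neg φ

/-- Conjunction of a nonempty list of formulas: conjL L φ [ψ₁,…] = φ ∧ ψ₁ ∧ … . -/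
def conjL (L : Logic) : L.F → List L.F → L.F
  | φ, [] => φ
  | φ, ψ :: l => L.conj φ (conjL L ψ l)

/-- A (defeasible) rule: antecedents and conclusion. -/
abbrev Rule (L : Logic) := List L.F × L.F

/-- An argumentation system of Deductive ASPIC⊖: satisfiable axioms, defeasible rules,
a (partial) naming function and a total preorder on defeasible rules.  The strict rules
are the axiomatic rules together with all consequence-based rules. -/
structure ASys (L : Logic) where
  AX : Set L.F
  AX_sat : ∃ i, ∀ φ ∈ AX, L.Models i φ
  Rd : Set (Rule L)
  name : Rule L → Option L.F
  rpref : Rule L → Rule L → Prop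
  rpref_refl : ∀ r, rpref r r
  rpref_trans : ∀ r s t, rpref r s → rpref s t → rpref r t
  rpref_total : ∀ r s, rpref r s ∨ rpref s r

/-- Top-rule kinds: axiomatic, consequence-based strict, defeasible. -/
inductive RK : Type
  | ax | cb | df
deriving DecidableEq

/-- Argument trees (with the kind of the top rule and the conclusion recorded). -/
inductive Arg (L : Logic) : Type
  | node (k : RK) (subs : List (Arg L)) (concl : L.F)

def Arg.concl {L : Logic} : Arg L → L.F
  | .node _ _ φ => φ

def Arg.subs {L : Logic} : Arg L → List (Arg L)
  | .node _ s _ => s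

def Arg.kind {L : Logic} : Arg L → RK
  | .node k _ _ => k

/-- Well-formed arguments of an argumentation system. -/
inductive Wf (L : Logic) (as : ASys L) : Arg L → Prop
  | ax (φ : L.F) (h : φ ∈ as.AX) : Wf L as (.node .ax [] φ)
  | cb (subs : List (Arg L)) (φ : L.F) (hs : ∀ a ∈ subs, Wf L as a)
      (h : Conseq L {ψ | ∃ a ∈ subs, Arg.concl a = ψ} φ) : Wf L as (.node .cb subs φ)
  | df (subs : List (Arg L)) (φ : L.F) (hs : ∀ a ∈ subs, Wf L as a)
      (h : (subs.map Arg.concl, φ) ∈ as.Rd) : Wf L as (.node .df subs φ)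

/-- Sub-argument relation: `Sub a b` means a is a sub-argument of b. -/
inductive Sub (L : Logic) : Arg L → Arg L → Prop
  | refl (a : Arg L) : Sub L a a
  | step (a b : Arg L) (k : RK) (subs : List (Arg L)) (φ : L.F)
      (hb : b ∈ subs) (h : Sub L a b) : Sub L a (.node k subs φ)

/-- Conclusions of the sub-arguments of a. -/
def SubC (L : Logic) (a : Arg L) : Set L.F := {φ | ∃ b, Sub L b a ∧ Arg.concl b = φ}

/-- Axiomatic and defeasible sub-arguments. -/
def ADSub (L : Logic) (a : Arg L) : Set (Arg L) := {b | Sub L b a ∧ Arg.kind b ≠ RK.cb}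

/-- Conclusions of the axiomatic and defeasible sub-arguments. -/
def ADSubC (L : Logic) (a : Arg L) : Set L.F :=
  {φ | ∃ b, Sub L b a ∧ Arg.kind b ≠ RK.cb ∧ Arg.concl b = φ}

/-- Defeasible rules used in an argument. -/
def DR (L : Logic) (a : Arg L) : Set (Rule L) :=
  {r | ∃ subs, Sub L (Arg.node RK.df subs r.2) a ∧ r.1 = subs.map Arg.concl}

/-- Strict arguments: no defeasible rules used. -/
def IsStrictArg (L : Logic) (a : Arg L) : Prop := DR L a = ∅

/-- Elitist weakest-link lifting of the rule preorder to arguments (a ⪯_ewl b). -/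
def ewl (L : Logic) (as : ASys L) (a b : Arg L) : Prop :=
  (DR L a = ∅ ∧ DR L b = ∅) ∨ ∃ ra ∈ DR L a, ∀ rb ∈ DR L b, as.rpref ra rb

/-- a undercuts b: the conclusion of a is the negation of the name of a defeasible rule
used in b. -/
def Undercuts (L : Logic) (as : ASys L) (a b : Arg L) : Prop :=
  ∃ subs φ, Sub L (Arg.node RK.df subs φ) b ∧
    ∃ nm, as.name (subs.map Arg.concl, φ) = some nm ∧ negOf L (Arg.concl a) nm

/-- a gen-rebuts b: b is defeasible and the conclusion of a is the negation of a conjunction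
of conclusions of sub-arguments of b. -/
def GenRebuts (L : Logic) (a b : Arg L) : Prop :=
  DR L b ≠ ∅ ∧ ∃ (φ : L.F) (l : List L.F),
    (∀ χ ∈ φ :: l, χ ∈ SubC L b) ∧ Arg.concl a = L.neg (conjL L φ l)

/-- a defeats b: a undercuts b, or a gen-rebuts b and a is not strictly weaker than b. -/
def Defeats (L : Logic) (as : ASys L) (a b : Arg L) : Prop :=
  Undercuts L as a b ∨
    (GenRebuts L a b ∧ ¬ (ewl L as a b ∧ ¬ ewl L as b a))

/-- The strict rules of an argumentation system: axiomatic or consequence-based. -/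
def StrictRule (L : Logic) (as : ASys L) (r : Rule L) : Prop :=
  (r.1 = [] ∧ r.2 ∈ as.AX) ∨ Conseq L {φ | φ ∈ r.1} r.2

end ASPIC

namespace ASPIC

/-- The well-formed arguments of an argumentation system. -/
def WfArg (L : Logic) (as : ASys L) : Type := {a : Arg L // Wf L as a}

/-- The JSBAF corresponding to an argumentation system: attacks are defeats, supports are
applications of strict rules, preferences are the elitist weakest-link lifting. -/
def toJ (L : Logic) (as : ASys L) : JS.JSBAF (WfArg L as) where
  att a b := Defeats L as a.1 b.1
  supp S b := (Arg.kind b.1 = RK.ax ∨ Arg.kind b.1 = RK.cb) ∧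
    S = {a : WfArg L as | a.1 ∈ Arg.subs b.1}
  pref a b := ewl L as a.1 b.1

/-- The conclusions of the IN-arguments of a labeling. -/
def concls (L : Logic) (as : ASys L) (Lb : WfArg L as → JS.Lab) : Set L.F :=
  {φ | ∃ a : WfArg L as, Lb a = JS.Lab.IN ∧ Arg.concl a.1 = φ}

/-- The AS is consistent: no two strict arguments have contradictory conclusions. -/
def ASConsistent (L : Logic) (as : ASys L) : Prop :=
  ¬ ∃ a b : Arg L, Wf L as a ∧ Wf L as b ∧ DR L a = ∅ ∧ DR L b = ∅ ∧
      negOf L (Arg.concl a) (Arg.concl b)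

end ASPIC

namespace ASPIC

variable {L : Logic} {as : ASys L}

/-! ### Basic lemmas about `Sub` and `Wf` -/

theorem Sub.trans' {a b c : Arg L} (h1 : Sub L a b) (h2 : Sub L b c) : Sub L a c := by
  induction h2 with
  | refl => exact h1
  | step y k subs φ hy hxy ih => exact Sub.step a y k subs φ hy ih

theorem sub_of_mem {e t : Arg L} (h : e ∈ Arg.subs t) : Sub L e t := by
  cases t with
  | node k subs φ => exact Sub.step e e k subs φ h (Sub.refl e)

theorem wf_of_mem_subs {k : RK} {subs : List (Arg L)} {φ : L.F}
    (h : Wf L as (.node k subs φ)) {s : Arg L} (hs : s ∈ subs) : Wf L as s := by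
  cases h with
  | ax _ _ => exact absurd hs List.not_mem_nil
  | cb _ _ hws _ => exact hws s hs
  | df _ _ hws _ => exact hws s hs

theorem wf_of_subs {t e : Arg L} (ht : Wf L as t) (he : e ∈ Arg.subs t) : Wf L as e := by
  cases t with
  | node k subs φ => exact wf_of_mem_subs ht he

theorem wf_of_sub {s z : Arg L} (h : Sub L s z) (hz : Wf L as z) : Wf L as s := by
  induction h with
  | refl => exact hz
  | step b k subs φ hb hsb ih => exact ih (wf_of_mem_subs hz hb)

theorem sub_inv {z t : Arg L} (h : Sub L z t) : z = t ∨ ∃ s ∈ Arg.subs t, Sub L z s := by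
  cases h with
  | refl => exact Or.inl rfl
  | step b k subs φ hb hzb => exact Or.inr ⟨b, hb, hzb⟩

theorem mem_DR_node {r : Rule L} {k : RK} {subs : List (Arg L)} {φ : L.F} :
    r ∈ DR L (.node k subs φ) ↔
      (k = RK.df ∧ r.1 = subs.map Arg.concl ∧ r.2 = φ) ∨ ∃ s ∈ subs, r ∈ DR L s := by
  constructor
  · rintro ⟨subs₂, hsub, hm⟩
    rcases sub_inv hsub with heq | ⟨s, hs, hsub'⟩
    · rw [Arg.node.injEq] at heq
      obtain ⟨hk, hsubs, hφ⟩ := heq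
      exact Or.inl ⟨hk.symm, by rw [hm, hsubs], hφ⟩
    · exact Or.inr ⟨s, hs, subs₂, hsub', hm⟩
  · rintro (⟨hk, h1, h2⟩ | ⟨s, hs, subs₂, hsub, hm⟩)
    · subst hk
      exact ⟨subs, by rw [h2]; exact Sub.refl _, h1⟩
    · exact ⟨subs₂, Sub.trans' hsub (sub_of_mem hs), hm⟩

theorem mem_AD_node {χ : L.F} {k : RK} {subs : List (Arg L)} {φ : L.F} :
    χ ∈ ADSubC L (.node k subs φ) ↔
      (k ≠ RK.cb ∧ χ = φ) ∨ ∃ s ∈ subs, χ ∈ ADSubC L s := by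
  constructor
  · rintro ⟨z, hsub, hk, hc⟩
    rcases sub_inv hsub with heq | ⟨s, hs, hsub'⟩
    · subst heq
      exact Or.inl ⟨hk, hc.symm⟩
    · exact Or.inr ⟨s, hs, z, hsub', hk, hc⟩
  · rintro (⟨hk, h1⟩ | ⟨s, hs, z, hsub, hk, hc⟩)
    · exact ⟨.node k subs φ, Sub.refl _, hk, h1.symm⟩
    · exact ⟨z, Sub.trans' hsub (sub_of_mem hs), hk, hc⟩

theorem subC_of_mem_subs {e : Arg L} {k : RK} {subs : List (Arg L)} {φ : L.F}
    (he : e ∈ subs) {χ : L.F} (h : χ ∈ SubC L e) : χ ∈ SubC L (.node k subs φ) := by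
  obtain ⟨t, ht, rfl⟩ := h
  exact ⟨t, Sub.step t e k subs φ he ht, rfl⟩

theorem adsubC_subset_subC {t : Arg L} : ADSubC L t ⊆ SubC L t :=
  fun _ ⟨b, h1, _, h3⟩ => ⟨b, h1, h3⟩

theorem dr_of_mem_subs {e : Arg L} {k : RK} {subs : List (Arg L)} {φ : L.F}
    (he : e ∈ subs) : DR L e ⊆ DR L (.node k subs φ) :=
  fun _ hr => mem_DR_node.mpr (Or.inr ⟨e, he, hr⟩)

/-! ### Finiteness -/

theorem DR_finite {t : Arg L} (ht : Wf L as t) : (DR L t).Finite := by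
  induction ht with
  | ax φ h =>
    have : DR L (Arg.node RK.ax [] φ) = ∅ := by
      ext r
      simp [mem_DR_node]
    rw [this]; exact Set.finite_empty
  | cb subs φ hws hc ih =>
    apply Set.Finite.subset (Set.Finite.biUnion (List.finite_toSet subs) (fun s hs => ih s hs))
    intro r hr
    rcases mem_DR_node.mp hr with ⟨hk, _⟩ | ⟨s, hs, hrs⟩
    · exact absurd hk (by decide)
    · exact Set.mem_biUnion hs hrs
  | df subs φ hws hr ih =>
    apply Set.Finite.subset
      (Set.Finite.insert ((subs.map Arg.concl, φ) : Rule L)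
        (Set.Finite.biUnion (List.finite_toSet subs) (fun s hs => ih s hs)))
    intro r hrr
    rcases mem_DR_node.mp hrr with ⟨_, h1, h2⟩ | ⟨s, hs, hrs⟩
    · exact Set.mem_insert_iff.mpr (Or.inl (Prod.ext h1 h2))
    · exact Set.mem_insert_iff.mpr (Or.inr (Set.mem_biUnion hs hrs))

theorem adsubC_finite {t : Arg L} (ht : Wf L as t) : (ADSubC L t).Finite := by
  induction ht with
  | ax φ h =>
    apply Set.Finite.subset (Set.finite_singleton φ)
    intro χ hχ
    rcases mem_AD_node.mp hχ with ⟨_, rfl⟩ | ⟨s, hs, _⟩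
    · exact rfl
    · exact absurd hs List.not_mem_nil
  | cb subs φ hws hc ih =>
    apply Set.Finite.subset (Set.Finite.biUnion (List.finite_toSet subs) (fun s hs => ih s hs))
    intro χ hχ
    rcases mem_AD_node.mp hχ with ⟨hk, _⟩ | ⟨s, hs, hχs⟩
    · exact absurd rfl hk
    · exact Set.mem_biUnion hs hχs
  | df subs φ hws hr ih =>
    apply Set.Finite.subset
      (Set.Finite.insert φ (Set.Finite.biUnion (List.finite_toSet subs) (fun s hs => ih s hs)))
    intro χ hχ
    rcases mem_AD_node.mp hχ with ⟨_, rfl⟩ | ⟨s, hs, hχs⟩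
    · exact Set.mem_insert_iff.mpr (Or.inl rfl)
    · exact Set.mem_insert_iff.mpr (Or.inr (Set.mem_biUnion hs hχs))

/-! ### Minima for the rule preorder, and `ewl` facts -/

theorem exists_rpref_min (as : ASys L) :
    ∀ l : List (Rule L), l ≠ [] → ∃ r ∈ l, ∀ s ∈ l, as.rpref r s := by
  intro l
  induction l with
  | nil => intro h; exact absurd rfl h
  | cons x tl ih =>
    intro _
    rcases eq_or_ne tl [] with rfl | hne
    · refine ⟨x, by simp, ?_⟩
      intro s hs
      rw [List.mem_singleton] at hs
      subst hs
      exact as.rpref_refl _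
    · obtain ⟨r, hr, hall⟩ := ih hne
      rcases as.rpref_total x r with h | h
      · refine ⟨x, by simp, ?_⟩
        intro s hs
        rcases List.mem_cons.mp hs with rfl | hs'
        · exact as.rpref_refl s
        · exact as.rpref_trans x r s h (hall s hs')
      · refine ⟨r, List.mem_cons_of_mem _ hr, ?_⟩
        intro s hs
        rcases List.mem_cons.mp hs with rfl | hs'
        · exact h
        · exact hall s hs'

theorem exists_rpref_min_set (as : ASys L) {s : Set (Rule L)} (hfin : s.Finite)
    (hne : s.Nonempty) : ∃ r ∈ s, ∀ r' ∈ s, as.rpref r r' := by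
  obtain ⟨x, hx⟩ := hne
  have hxl : x ∈ hfin.toFinset.toList := by
    rw [Finset.mem_toList, Set.Finite.mem_toFinset]; exact hx
  obtain ⟨r, hr, hall⟩ := exists_rpref_min as hfin.toFinset.toList (List.ne_nil_of_mem hxl)
  refine ⟨r, ?_, ?_⟩
  · rw [← Set.Finite.mem_toFinset hfin, ← Finset.mem_toList]; exact hr
  · intro r' hr'
    apply hall
    rw [Finset.mem_toList, Set.Finite.mem_toFinset]; exact hr'

theorem ewl_refl {t : Arg L} (ht : Wf L as t) : ewl L as t t := by
  by_cases h : DR L t = ∅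
  · exact Or.inl ⟨h, h⟩
  · obtain ⟨r, hr, hall⟩ := exists_rpref_min_set as (DR_finite ht)
      (Set.nonempty_iff_ne_empty.mpr h)
    exact Or.inr ⟨r, hr, hall⟩

theorem ewl_total {x y : Arg L} (hx : Wf L as x) (hy : Wf L as y) :
    ewl L as x y ∨ ewl L as y x := by
  by_cases hxe : DR L x = ∅ <;> by_cases hye : DR L y = ∅
  · exact Or.inl (Or.inl ⟨hxe, hye⟩)
  · obtain ⟨r, hr⟩ := Set.nonempty_iff_ne_empty.mpr hye
    exact Or.inr (Or.inr ⟨r, hr, fun s hs => absurd (hxe ▸ hs) (Set.notMem_empty s)⟩)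
  · obtain ⟨r, hr⟩ := Set.nonempty_iff_ne_empty.mpr hxe
    exact Or.inl (Or.inr ⟨r, hr, fun s hs => absurd (hye ▸ hs) (Set.notMem_empty s)⟩)
  · obtain ⟨r, hr, hall⟩ := exists_rpref_min_set as ((DR_finite hx).union (DR_finite hy))
      (by obtain ⟨r, hr⟩ := Set.nonempty_iff_ne_empty.mpr hxe; exact ⟨r, Or.inl hr⟩)
    rcases hr with hr | hr
    · exact Or.inl (Or.inr ⟨r, hr, fun s hs => hall s (Or.inr hs)⟩)
    · exact Or.inr (Or.inr ⟨r, hr, fun s hs => hall s (Or.inl hs)⟩)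

theorem ewl_trans {x y z : Arg L} (h1 : ewl L as x y) (h2 : ewl L as y z) :
    ewl L as x z := by
  rcases h1 with ⟨hx, hy⟩ | ⟨r, hr, hall⟩
  · rcases h2 with ⟨_, hz⟩ | ⟨r', hr', hall'⟩
    · exact Or.inl ⟨hx, hz⟩
    · rw [hy] at hr'
      exact absurd hr' (Set.notMem_empty r')
  · rcases h2 with ⟨hy', hz⟩ | ⟨r', hr', hall'⟩
    · exact Or.inr ⟨r, hr, fun s hs => absurd (hz ▸ hs) (Set.notMem_empty s)⟩
    · exact Or.inr ⟨r, hr, fun s hs => as.rpref_trans r r' s (hall r' hr') (hall' s hs)⟩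

/-- If `x ⪯ Y` and `DR y ⊆ DR Y` then `x ⪯ y`. -/
theorem ewl_right_sub {x y Y : Arg L} (h : ewl L as x Y) (hsub : DR L y ⊆ DR L Y) :
    ewl L as x y := by
  rcases h with ⟨hx, hY⟩ | ⟨r, hr, hall⟩
  · exact Or.inl ⟨hx, Set.subset_empty_iff.mp (hY ▸ hsub)⟩
  · exact Or.inr ⟨r, hr, fun s hs => hall s (hsub hs)⟩

/-- If `y ⪯ x` and `DR y ⊆ DR Y` then `Y ⪯ x`. -/
theorem ewl_left_sub {x y Y : Arg L} (h : ewl L as y x) (hsub : DR L y ⊆ DR L Y) :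
    ewl L as Y x := by
  rcases h with ⟨hy, hx⟩ | ⟨r, hr, hall⟩
  · by_cases hYe : DR L Y = ∅
    · exact Or.inl ⟨hYe, hx⟩
    · obtain ⟨r, hr⟩ := Set.nonempty_iff_ne_empty.mpr hYe
      exact Or.inr ⟨r, hr, fun s hs => absurd (hx ▸ hs) (Set.notMem_empty s)⟩
  · exact Or.inr ⟨r, hsub hr, hall⟩

theorem ewl_congr_left {x₁ x₂ y : Arg L} (h : DR L x₁ = DR L x₂) :
    ewl L as x₁ y ↔ ewl L as x₂ y := by
  unfold ewl; rw [h]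

theorem ewl_congr_right {x y₁ y₂ : Arg L} (h : DR L y₁ = DR L y₂) :
    ewl L as x y₁ ↔ ewl L as x y₂ := by
  unfold ewl; rw [h]

theorem exists_ewl_min (ml : List (Arg L)) (hwf : ∀ e ∈ ml, Wf L as e) (h : ml ≠ []) :
    ∃ mm ∈ ml, ∀ z ∈ ml, ewl L as mm z := by
  induction ml with
  | nil => exact absurd rfl h
  | cons x tl ih =>
    rcases eq_or_ne tl [] with rfl | hne
    · refine ⟨x, by simp, ?_⟩
      intro z hz
      rw [List.mem_singleton] at hz
      subst hz
      exact ewl_refl (hwf z (by simp))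
    · obtain ⟨mm, hmm, hall⟩ := ih (fun e he => hwf e (List.mem_cons_of_mem _ he)) hne
      rcases ewl_total (hwf x (by simp)) (hwf mm (List.mem_cons_of_mem _ hmm)) with hx | hm
      · refine ⟨x, by simp, ?_⟩
        intro z hz
        rcases List.mem_cons.mp hz with rfl | hz'
        · exact ewl_refl (hwf z (by simp))
        · exact ewl_trans hx (hall z hz')
      · refine ⟨mm, List.mem_cons_of_mem _ hmm, ?_⟩
        intro z hz
        rcases List.mem_cons.mp hz with rfl | hz'
        · exact hm
        · exact hall z hz'

/-! ### Semantics -/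

theorem models_conjL (i : L.I) : ∀ (l : List L.F) (φ : L.F),
    L.Models i (conjL L φ l) ↔ (L.Models i φ ∧ ∀ χ ∈ l, L.Models i χ) := by
  intro l
  induction l with
  | nil => intro φ; simp [conjL]
  | cons ψ tl ih =>
    intro φ
    rw [conjL, L.conj_spec, ih ψ]
    constructor
    · rintro ⟨h1, h2, h3⟩
      refine ⟨h1, ?_⟩
      intro χ hχ
      rcases List.mem_cons.mp hχ with rfl | hχ'
      · exact h2
      · exact h3 χ hχ'
    · rintro ⟨h1, h2⟩
      exact ⟨h1, h2 ψ (by simp), fun χ hχ => h2 χ (List.mem_cons_of_mem _ hχ)⟩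

/-- If an interpretation models all conclusions of axiomatic and defeasible sub-arguments of
`z`, then it models the conclusion of every sub-argument of `z`. -/
theorem entail (i : L.I) {z : Arg L} (H : ∀ ψ ∈ ADSubC L z, L.Models i ψ)
    {s : Arg L} (hs : Wf L as s) (hsub : Sub L s z) : L.Models i (Arg.concl s) := by
  induction hs generalizing z with
  | ax φ h => exact H φ ⟨_, hsub, fun h' => RK.noConfusion h', rfl⟩
  | cb subs φ hws hc ih =>
    apply hc i
    rintro ψ ⟨t, ht, rfl⟩
    exact ih t ht H (Sub.trans' (sub_of_mem (t := Arg.node RK.cb subs φ) ht) hsub)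
  | df subs φ hws hr ih => exact H φ ⟨_, hsub, fun h' => RK.noConfusion h', rfl⟩

end ASPIC

namespace ASPIC

variable {L : Logic} {as : ASys L}

/-- Any well-formed consequence-based argument all of whose direct sub-arguments are labeled
IN must itself be labeled IN in an admissible labeling. -/
theorem force_in (Lb : WfArg L as → JS.Lab) (hadm : JS.Admissible (toJ L as) Lb)
    (lst : List (Arg L)) (φ : L.F) (V : WfArg L as) (hV : V.1 = Arg.node RK.cb lst φ)
    (h : ∀ z : WfArg L as, z.1 ∈ lst → Lb z = JS.Lab.IN) : Lb V = JS.Lab.IN := by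
  have hsupp : (toJ L as).supp {z : WfArg L as | z.1 ∈ lst} V := by
    constructor
    · right; rw [hV]; rfl
    · rw [hV]; rfl
  by_cases hnil : lst = []
  · subst hnil
    apply hadm.2.2
    exact JS.Strict.mk {z : WfArg L as | z.1 ∈ ([] : List (Arg L))} V hsupp
      (fun b hb => absurd (show b.1 ∈ ([] : List (Arg L)) from hb) List.not_mem_nil)
  · have hwfl : ∀ e ∈ lst, Wf L as e := fun e he => wf_of_mem_subs (hV ▸ V.2) he
    obtain ⟨mA, hmA, hmin⟩ := exists_ewl_min (as := as) lst hwfl hnil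
    have hmIN : Lb ⟨mA, hwfl mA hmA⟩ = JS.Lab.IN := h _ hmA
    have hgate : ∀ b ∈ {z : WfArg L as | z.1 ∈ lst}, b ≠ ⟨mA, hwfl mA hmA⟩ →
        (toJ L as).pref ⟨mA, hwfl mA hmA⟩ b := fun b hb _ => hmin b.1 hb
    rcases (hadm.1 _ hmIN).2 _ V hsupp hmA hgate with
      hIN | ⟨_, bb, hbb, _, hor⟩ | ⟨_, ⟨bb, hbb, _, hO⟩ | ⟨b₁, hb₁, _, _, _, _, _, hU₁, _⟩⟩
    · exact hIN
    · have hbIN := h bb hbb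
      rcases hor with h' | h' <;> rw [hbIN] at h' <;> exact JS.Lab.noConfusion h'
    · have hbIN := h bb hbb
      rw [hbIN] at hO
      exact JS.Lab.noConfusion hO
    · have hbIN := h b₁ hb₁
      rw [hbIN] at hU₁
      exact JS.Lab.noConfusion hU₁

/-- From an IN argument `c` that gen-rebuts (and is not strictly weaker than) an argument `z`,
construct an IN attacker of any argument `T` that covers the defeasible rules and the
AD-sub-conclusions of `z`. -/
theorem attack_lemma (Lb : WfArg L as → JS.Lab) (hadm : JS.Admissible (toJ L as) Lb)
    (c : WfArg L as) (hcIN : Lb c = JS.Lab.IN)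
    (z : Arg L) (hwz : Wf L as z) (hgen : GenRebuts L c.1 z)
    (hnp : ¬ (ewl L as c.1 z ∧ ¬ ewl L as z c.1))
    (T : WfArg L as) (hDRz : DR L z ⊆ DR L T.1)
    (hADz : ∀ χ ∈ ADSubC L z, χ ∈ SubC L T.1) :
    ∃ w : WfArg L as, (toJ L as).att w T ∧ Lb w = JS.Lab.IN := by
  classical
  obtain ⟨hne, γ, γs, hγmem, hγconcl⟩ := hgen
  set Δ : List L.F := (adsubC_finite hwz).toFinset.toList with hΔdef
  have hΔ : ∀ χ, χ ∈ Δ ↔ χ ∈ ADSubC L z := by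
    intro χ
    rw [hΔdef, Finset.mem_toList, Set.Finite.mem_toFinset]
  have hwwf : Wf L as (.node RK.cb [c.1] (L.neg (conjL L (Arg.concl T.1) Δ))) := by
    apply Wf.cb
    · intro x hx
      rw [List.mem_singleton] at hx
      subst hx
      exact c.2
    · intro i hi
      have hc : L.Models i (Arg.concl c.1) := hi _ ⟨c.1, List.mem_singleton_self _, rfl⟩
      rw [hγconcl, L.neg_spec] at hc
      rw [L.neg_spec]
      intro hcontra
      apply hc
      obtain ⟨-, hΔmod⟩ := (models_conjL i Δ _).mp hcontra
      have hAD : ∀ ψ ∈ ADSubC L z, L.Models i ψ := fun ψ hψ => hΔmod ψ ((hΔ ψ).mpr hψ)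
      rw [models_conjL]
      constructor
      · obtain ⟨s, hs, rfl⟩ := hγmem γ (List.mem_cons_self)
        exact entail i hAD (wf_of_sub hs hwz) hs
      · intro χ hχ
        obtain ⟨s, hs, rfl⟩ := hγmem χ (List.mem_cons_of_mem _ hχ)
        exact entail i hAD (wf_of_sub hs hwz) hs
  refine ⟨⟨_, hwwf⟩, ?_, ?_⟩
  · right
    have hDRw : DR L (Arg.node RK.cb [c.1] (L.neg (conjL L (Arg.concl T.1) Δ))) = DR L c.1 := by
      ext r
      rw [mem_DR_node]
      constructor
      · rintro (⟨hk, -⟩ | ⟨s, hs, hrs⟩)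
        · exact absurd hk (by decide)
        · rw [List.mem_singleton] at hs
          subst hs
          exact hrs
      · intro hr
        exact Or.inr ⟨c.1, List.mem_singleton_self _, hr⟩
    constructor
    · refine ⟨?_, Arg.concl T.1, Δ, ?_, rfl⟩
      · intro hemp
        obtain ⟨r, hr⟩ := Set.nonempty_iff_ne_empty.mpr hne
        exact absurd (hDRz hr) (hemp ▸ Set.notMem_empty r)
      · intro χ hχ
        rcases List.mem_cons.mp hχ with rfl | hχ'
        · exact ⟨T.1, Sub.refl _, rfl⟩
        · exact hADz χ ((hΔ χ).mp hχ')
    · rintro ⟨h1, h2⟩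
      apply hnp
      constructor
      · exact ewl_right_sub ((ewl_congr_left hDRw).mp h1) hDRz
      · intro hzc
        exact h2 ((ewl_congr_right hDRw.symm).mp (ewl_left_sub hzc hDRz))
  · apply force_in Lb hadm [c.1] _ _ rfl
    intro u hu
    rw [List.mem_singleton] at hu
    have : u = c := Subtype.ext hu
    rw [this]
    exact hcIN

end ASPIC

open ASPIC in
/-- In any admissible labeling of the JSBAF of a Deductive ASPIC⊖ argumentation
system, if DR(a′) ⊆ DR(a) and ADSub(a′)^C ⊆ ADSub(a)^C and a′ is labeled OUT, then a is labeled
OUT. -/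
theorem out_propagates_to_supersets (L : Logic) (as : ASys L)
    (Lb : WfArg L as → JS.Lab) (hadm : JS.Admissible (toJ L as) Lb)
    (a a' : WfArg L as)
    (hDR : DR L a'.1 ⊆ DR L a.1) (hAD : ADSubC L a'.1 ⊆ ADSubC L a.1)
    (hout : Lb a' = JS.Lab.OUT) :
    Lb a = JS.Lab.OUT := by
  classical
  rcases (hadm.2.1 a').mp hout with ⟨c, hcatt, hcIN⟩ | ⟨n, S, b, h1, h2, h3, h4, h5, h6, h7, h8⟩
  · -- Case A: a' has an IN attacker c
    rcases hcatt with hund | ⟨hgen, hnp⟩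
    · -- the undercut transfers to a
      obtain ⟨subs, φ, hsub, nm, hnm, hneg⟩ := hund
      obtain ⟨subs', hsub', hm'⟩ := hDR
        (show ((subs.map Arg.concl, φ) : Rule L) ∈ DR L a'.1 from ⟨subs, hsub, rfl⟩)
      exact (hadm.2.1 a).mpr (Or.inl ⟨c, Or.inl ⟨subs', φ, hsub', nm,
        by rw [← hm']; exact hnm, hneg⟩, hcIN⟩)
    · -- the gen-rebut gives rise to an IN attacker of a
      obtain ⟨w, hw, hwIN⟩ := attack_lemma Lb hadm c hcIN a'.1 a'.2 hgen hnp a hDR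
        (fun χ hχ => adsubC_subset_subC (hAD hχ))
      exact (hadm.2.1 a).mpr (Or.inl ⟨w, hw, hwIN⟩)
  · -- Case B: a' is OUT via a support chain ending in the IN-attacked argument b n
    obtain ⟨c, hcatt, hcIN⟩ := h5
    have hSset : ∀ i ≤ n, S i = {z : WfArg L as | z.1 ∈ Arg.subs (b i).1} :=
      fun i hi => (h1 i hi).2
    -- the "previous" element of the chain at each level
    let prevA : ℕ → Arg L := fun i => Nat.casesOn i a'.1 (fun j => (b j).1)
    have hprev : ∀ i ≤ n, prevA i ∈ Arg.subs (b i).1 := by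
      intro i hi
      cases i with
      | zero =>
        have h := h3
        rw [hSset 0 (Nat.zero_le n)] at h
        exact h
      | succ j =>
        have h := h2 j (by omega)
        rw [hSset (j+1) hi] at h
        exact h
    have hcbform : ∀ i ≤ n, ∃ l ψ, (b i).1 = Arg.node RK.cb l ψ := by
      intro i hi
      have hk := (h1 i hi).1
      have hmem := hprev i hi
      cases hbi : (b i).1 with
      | node k l ψ =>
        cases k with
        | ax =>
          have hwf := (b i).2
          rw [hbi] at hwf
          cases hwf with
          | ax _ _ =>
            rw [hbi] at hmem
            exact absurd hmem List.not_mem_nil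
        | cb => exact ⟨l, ψ, rfl⟩
        | df =>
          rw [hbi] at hk
          simp [Arg.kind] at hk
    -- the list of all co-members of the chain (all labeled IN)
    let allCo : List (Arg L) := (List.range (n+1)).flatMap
      (fun i => (Arg.subs (b i).1).filter (fun (e : Arg L) => @decide (e ≠ prevA i) (Classical.propDecidable _)))
    have hallCo_mem : ∀ e ∈ allCo, ∃ i ≤ n, e ∈ Arg.subs (b i).1 ∧ e ≠ prevA i := by
      intro e he
      obtain ⟨i, hi, hf⟩ := List.mem_flatMap.mp he
      rw [List.mem_range] at hi
      obtain ⟨hmem, hdec⟩ := List.mem_filter.mp hf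
      exact ⟨i, by omega, hmem, @of_decide_eq_true _ (Classical.propDecidable _) hdec⟩
    have hallCo_of : ∀ i ≤ n, ∀ e ∈ Arg.subs (b i).1, e ≠ prevA i → e ∈ allCo := by
      intro i hi e he hne
      exact List.mem_flatMap.mpr ⟨i, List.mem_range.mpr (by omega),
        List.mem_filter.mpr ⟨he, @decide_eq_true _ (Classical.propDecidable _) hne⟩⟩
    have hallCo_wf : ∀ e ∈ allCo, Wf L as e := by
      intro e he
      obtain ⟨i, hi, hmem, -⟩ := hallCo_mem e he
      exact wf_of_subs (b i).2 hmem
    have hallCo_in : ∀ z : WfArg L as, z.1 ∈ allCo → Lb z = JS.Lab.IN := by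
      intro z hz
      obtain ⟨i, hi, hmem, hne⟩ := hallCo_mem z.1 hz
      have hzS : z ∈ S i := by
        rw [hSset i hi]
        exact hmem
      cases i with
      | zero => exact h4 z hzS (fun h => hne (congrArg Subtype.val h))
      | succ j =>
        apply h7 (j+1) (by omega) hi z hzS
        intro h
        apply hne
        have h' : z.1 = (b ((j+1)-1)).1 := congrArg Subtype.val h
        simpa using h'
    -- coverage of the defeasible rules and AD-sub-conclusions of the chain
    have hDRcov : ∀ i ≤ n, DR L (b i).1 ⊆ DR L a'.1 ∪ {r | ∃ e ∈ allCo, r ∈ DR L e} := by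
      intro i
      induction i with
      | zero =>
        intro h0 r hr
        obtain ⟨l, ψ, heq⟩ := hcbform 0 h0
        rw [heq] at hr
        rcases mem_DR_node.mp hr with ⟨hk, -⟩ | ⟨s, hs, hrs⟩
        · exact absurd hk (by decide)
        · rcases eq_or_ne s (prevA 0) with rfl | hse
          · exact Or.inl hrs
          · exact Or.inr ⟨s, hallCo_of 0 h0 s (by rw [heq]; exact hs) hse, hrs⟩
      | succ j ih =>
        intro hj r hr
        obtain ⟨l, ψ, heq⟩ := hcbform (j+1) hj
        rw [heq] at hr
        rcases mem_DR_node.mp hr with ⟨hk, -⟩ | ⟨s, hs, hrs⟩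
        · exact absurd hk (by decide)
        · rcases eq_or_ne s (prevA (j+1)) with rfl | hse
          · exact ih (by omega) hrs
          · exact Or.inr ⟨s, hallCo_of (j+1) hj s (by rw [heq]; exact hs) hse, hrs⟩
    have hADcov : ∀ i ≤ n, ADSubC L (b i).1 ⊆
        ADSubC L a'.1 ∪ {χ | ∃ e ∈ allCo, χ ∈ ADSubC L e} := by
      intro i
      induction i with
      | zero =>
        intro h0 χ hχ
        obtain ⟨l, ψ, heq⟩ := hcbform 0 h0
        rw [heq] at hχ
        rcases mem_AD_node.mp hχ with ⟨hk, -⟩ | ⟨s, hs, hχs⟩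
        · exact absurd rfl hk
        · rcases eq_or_ne s (prevA 0) with rfl | hse
          · exact Or.inl hχs
          · exact Or.inr ⟨s, hallCo_of 0 h0 s (by rw [heq]; exact hs) hse, hχs⟩
      | succ j ih =>
        intro hj χ hχ
        obtain ⟨l, ψ, heq⟩ := hcbform (j+1) hj
        rw [heq] at hχ
        rcases mem_AD_node.mp hχ with ⟨hk, -⟩ | ⟨s, hs, hχs⟩
        · exact absurd rfl hk
        · rcases eq_or_ne s (prevA (j+1)) with rfl | hse
          · exact ih (by omega) hχs
          · exact Or.inr ⟨s, hallCo_of (j+1) hj s (by rw [heq]; exact hs) hse, hχs⟩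
    -- Analyse the attack of c on b n
    rcases hcatt with hund | ⟨hgen, hnp⟩
    · -- undercut: the undercut rule belongs to a' (transfer to a) or to an IN co-member
      obtain ⟨subs, φ, hsub, nm, hnm, hneg⟩ := hund
      rcases hDRcov n le_rfl
        (show ((subs.map Arg.concl, φ) : Rule L) ∈ DR L (b n).1 from ⟨subs, hsub, rfl⟩) with
        hra | ⟨e, he, hre⟩
      · obtain ⟨subs', hsub', hm'⟩ := hDR hra
        exact (hadm.2.1 a).mpr (Or.inl ⟨c, Or.inl ⟨subs', φ, hsub', nm,
          by rw [← hm']; exact hnm, hneg⟩, hcIN⟩)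
      · obtain ⟨subs', hsub', hm'⟩ := hre
        have heIN : Lb ⟨e, hallCo_wf e he⟩ = JS.Lab.IN := hallCo_in _ he
        have hco := (hadm.1 _ heIN).1 c
          (Or.inl ⟨subs', φ, hsub', nm, by rw [← hm']; exact hnm, hneg⟩)
        rw [hcIN] at hco
        exact JS.Lab.noConfusion hco
    · -- gen-rebut: build the IN argument m over c and all co-members
      have hm_subs_wf : ∀ x ∈ c.1 :: allCo, Wf L as x := by
        intro x hx
        rcases List.mem_cons.mp hx with rfl | hx'
        · exact c.2
        · exact hallCo_wf x hx'
      have hm_wf : Wf L as (.node RK.cb (c.1 :: allCo) (Arg.concl c.1)) :=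
        Wf.cb _ _ hm_subs_wf (fun i hi => hi _ ⟨c.1, List.mem_cons_self, rfl⟩)
      have hmIN : Lb ⟨_, hm_wf⟩ = JS.Lab.IN := by
        apply force_in Lb hadm (c.1 :: allCo) _ _ rfl
        intro u hu
        rcases List.mem_cons.mp hu with h | h
        · rw [Subtype.ext h]
          exact hcIN
        · exact hallCo_in u h
      have hDRco_m : ∀ e ∈ allCo,
          DR L e ⊆ DR L (Arg.node RK.cb (c.1 :: allCo) (Arg.concl c.1)) :=
        fun e he => dr_of_mem_subs (List.mem_cons_of_mem _ he)
      have hDRc_m : DR L c.1 ⊆ DR L (Arg.node RK.cb (c.1 :: allCo) (Arg.concl c.1)) :=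
        dr_of_mem_subs (List.mem_cons_self)
      rcases ewl_total (as := as) hm_wf a.2 with hma | ham
      · -- m ⪯ a : the support {m, a} of an OUT argument forces a to be OUT
        have hV_subs_wf :
            ∀ x ∈ [Arg.node RK.cb (c.1 :: allCo) (Arg.concl c.1), a.1], Wf L as x := by
          intro x hx
          rcases List.mem_cons.mp hx with rfl | hx'
          · exact hm_wf
          · rw [List.mem_singleton] at hx'
            subst hx'
            exact a.2
        have hV_wf : Wf L as (.node RK.cb
            [Arg.node RK.cb (c.1 :: allCo) (Arg.concl c.1), a.1] (Arg.concl a.1)) :=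
          Wf.cb _ _ hV_subs_wf
            (fun i hi => hi _ ⟨a.1, List.mem_cons_of_mem _ (List.mem_singleton_self _), rfl⟩)
        obtain ⟨w, hwatt, hwIN⟩ := attack_lemma Lb hadm c hcIN (b n).1 (b n).2 hgen hnp
          ⟨_, hV_wf⟩
          (by
            intro r hr
            rcases hDRcov n le_rfl hr with h | ⟨e, he, hre⟩
            · exact dr_of_mem_subs (List.mem_cons_of_mem _ (List.mem_singleton_self _)) (hDR h)
            · exact dr_of_mem_subs (List.mem_cons_self) (hDRco_m e he hre))
          (by
            intro χ hχ
            rcases hADcov n le_rfl hχ with h | ⟨e, he, hχe⟩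
            · exact subC_of_mem_subs (List.mem_cons_of_mem _ (List.mem_singleton_self _))
                (adsubC_subset_subC (hAD h))
            · exact subC_of_mem_subs (List.mem_cons_self)
                (subC_of_mem_subs (List.mem_cons_of_mem _ he) (adsubC_subset_subC hχe)))
        have hVOUT : Lb ⟨_, hV_wf⟩ = JS.Lab.OUT :=
          (hadm.2.1 _).mpr (Or.inl ⟨w, hwatt, hwIN⟩)
        have hsuppV : (toJ L as).supp
            {z : WfArg L as |
              z.1 ∈ [Arg.node RK.cb (c.1 :: allCo) (Arg.concl c.1), a.1]} ⟨_, hV_wf⟩ :=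
          ⟨Or.inr rfl, rfl⟩
        have hgate : ∀ bb ∈ {z : WfArg L as |
              z.1 ∈ [Arg.node RK.cb (c.1 :: allCo) (Arg.concl c.1), a.1]},
            bb ≠ ⟨_, hm_wf⟩ → (toJ L as).pref ⟨_, hm_wf⟩ bb := by
          intro bb hbb hne
          rcases List.mem_cons.mp hbb with h | h
          · exact absurd (Subtype.ext h) hne
          · rw [List.mem_singleton] at h
            show ewl L as _ bb.1
            rw [h]
            exact hma
        rcases (hadm.1 _ hmIN).2 _ ⟨_, hV_wf⟩ hsuppV (List.mem_cons_self) hgate with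
          hIN | ⟨hU, -⟩ | ⟨-, ⟨bb, hbb, hne, hbbOUT⟩ | ⟨b₁, hb₁, b₂, hb₂, hn1, hn2, hne12, -, -⟩⟩
        · rw [hVOUT] at hIN
          exact JS.Lab.noConfusion hIN
        · rw [hVOUT] at hU
          exact JS.Lab.noConfusion hU
        · rcases List.mem_cons.mp hbb with h | h
          · exact absurd (Subtype.ext h) hne
          · rw [List.mem_singleton] at h
            rw [← Subtype.ext h]
            exact hbbOUT
        · have e1 : b₁ = a := by
            rcases List.mem_cons.mp hb₁ with h | h
            · exact absurd (Subtype.ext h) hn1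
            · rw [List.mem_singleton] at h
              exact Subtype.ext h
          have e2 : b₂ = a := by
            rcases List.mem_cons.mp hb₂ with h | h
            · exact absurd (Subtype.ext h) hn2
            · rw [List.mem_singleton] at h
              exact Subtype.ext h
          exact absurd (e1.trans e2.symm) hne12
      · -- a ⪯ m : a support chain of length 0 shows a legally OUT
        have hV2_subs_wf : ∀ x ∈ a.1 :: c.1 :: allCo, Wf L as x := by
          intro x hx
          rcases List.mem_cons.mp hx with rfl | hx'
          · exact a.2
          · exact hm_subs_wf x hx'
        have hV2_wf : Wf L as (.node RK.cb (a.1 :: c.1 :: allCo) (Arg.concl a.1)) :=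
          Wf.cb _ _ hV2_subs_wf (fun i hi => hi _ ⟨a.1, List.mem_cons_self, rfl⟩)
        obtain ⟨w, hwatt, hwIN⟩ := attack_lemma Lb hadm c hcIN (b n).1 (b n).2 hgen hnp
          ⟨_, hV2_wf⟩
          (by
            intro r hr
            rcases hDRcov n le_rfl hr with h | ⟨e, he, hre⟩
            · exact dr_of_mem_subs (List.mem_cons_self) (hDR h)
            · exact dr_of_mem_subs (List.mem_cons_of_mem _ (List.mem_cons_of_mem _ he)) hre)
          (by
            intro χ hχ
            rcases hADcov n le_rfl hχ with h | ⟨e, he, hχe⟩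
            · exact subC_of_mem_subs (List.mem_cons_self) (adsubC_subset_subC (hAD h))
            · exact subC_of_mem_subs (List.mem_cons_of_mem _ (List.mem_cons_of_mem _ he))
                (adsubC_subset_subC hχe))
        have hV2OUT : Lb ⟨_, hV2_wf⟩ = JS.Lab.OUT :=
          (hadm.2.1 _).mpr (Or.inl ⟨w, hwatt, hwIN⟩)
        apply (hadm.2.1 a).mpr
        right
        refine ⟨0, fun _ => {z : WfArg L as | z.1 ∈ a.1 :: c.1 :: allCo}, fun _ => ⟨_, hV2_wf⟩,
          ?_, ?_, ?_, ?_, ?_, ?_, ?_, ?_⟩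
        · intro i _
          exact ⟨Or.inr rfl, rfl⟩
        · intro i hi
          exact absurd hi (Nat.not_lt_zero i)
        · exact List.mem_cons_self
        · intro d hd hne
          rcases List.mem_cons.mp hd with h | h
          · exact absurd (Subtype.ext h) hne
          · rcases List.mem_cons.mp h with h' | h'
            · rw [Subtype.ext h']
              exact hcIN
            · exact hallCo_in d h'
        · exact ⟨w, hwatt, hwIN⟩
        · intro i _
          exact hV2OUT
        · intro i hi1 hi0
          exact absurd (hi1.trans hi0) (by omega)
        · intro d hd hne
          show ewl L as a.1 d.1
          rcases List.mem_cons.mp hd with h | h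
          · exact absurd (Subtype.ext h) hne
          · rcases List.mem_cons.mp h with h' | h'
            · rw [h']
              exact ewl_right_sub ham hDRc_m
            · exact ewl_right_sub ham (hDRco_m d.1 h')
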